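/- Suppose n − K − L > 0, and let G_B2SLS = H − (K/(n − K − L))·(M − H) be the matrix underlying the bias-corrected two-stage least squares estimator. Then tr(G_B2SLS) = 0, G_B2SLS·W = 0, and G_B2SLS·Z̃ = Z̃; consequently, under homoskedasticity, E[xᵀG_B2SLS x] = ‖ℓ̃‖² and E[yᵀG_B2SLS x] = β·‖ℓ̃‖², so the bias-corrected two-stage least squares estimator is unbiased in the ratio-of-expectations sense under homoskedastic errors. -/

import Mathlib

open MeasureTheory Matrix BigOperators

lemma isUnit_of_rank_eq_card {m : ℕ} (A : Matrix (Fin m) (Fin m) ℝ) (h : A.rank = m) :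
    IsUnit A := by
  rw [← Matrix.mulVec_surjective_iff_isUnit]
  rw [Matrix.rank] at h
  have : LinearMap.range A.mulVecLin = ⊤ := by
    apply Submodule.eq_top_of_finrank_eq; simp [h]
  intro v; simpa using LinearMap.range_eq_top.mp this v

lemma l2_mul_integrable {Ω : Type*} [MeasurableSpace Ω] {μ : Measure Ω}
    {f g : Ω → ℝ} (hf : MemLp f 2 μ) (hg : MemLp g 2 μ) :
    Integrable (fun ω => f ω * g ω) μ := by
  have h1 := (hf.add hg).integrable_sq
  have h2 := hf.integrable_sq
  have h3 := hg.integrable_sq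
  have heq : (fun ω => f ω * g ω)
      = fun ω => ((f ω + g ω) ^ 2 - f ω ^ 2 - g ω ^ 2) / 2 := by
    funext ω; ring
  rw [heq]
  exact ((h1.sub h2).sub h3).div_const 2

lemma master {Ω : Type*} [MeasurableSpace Ω] (μ : Measure Ω) {n : ℕ}
    (G : Matrix (Fin n) (Fin n) ℝ) (f g : Ω → Fin n → ℝ)
    (hint : ∀ i j : Fin n, Integrable (fun ω => f ω i * g ω j) μ)
    (p q : Fin n → ℝ) (c : ℝ)
    (hval : ∀ i j : Fin n, ∫ ω, f ω i * g ω j ∂μ = p i * q j + if i = j then c else 0) :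
    ∫ ω, f ω ⬝ᵥ (G *ᵥ g ω) ∂μ = p ⬝ᵥ (G *ᵥ q) + c * G.trace := by
  have heq : ∀ ω, f ω ⬝ᵥ (G *ᵥ g ω) = ∑ i, ∑ j, G i j * (f ω i * g ω j) := by
    intro ω
    simp only [dotProduct, Matrix.mulVec, Finset.mul_sum]
    exact Finset.sum_congr rfl fun i _ => Finset.sum_congr rfl fun j _ => by ring
  simp_rw [heq]
  rw [integral_finset_sum _ (f := fun i ω => ∑ j, G i j * (f ω i * g ω j)) (fun i _ => integrable_finset_sum _
    (fun j _ => (hint i j).const_mul _))]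
  have : ∀ i : Fin n, ∫ ω, ∑ j, G i j * (f ω i * g ω j) ∂μ
      = ∑ j, G i j * (p i * q j + if i = j then c else 0) := by
    intro i
    rw [integral_finset_sum _ (fun j _ => (hint i j).const_mul _)]
    exact Finset.sum_congr rfl fun j _ => by rw [MeasureTheory.integral_const_mul, hval]
  simp_rw [this]
  have : p ⬝ᵥ (G *ᵥ q) = ∑ i, ∑ j, G i j * (p i * q j) := by
    simp only [dotProduct, Matrix.mulVec, Finset.mul_sum]
    exact Finset.sum_congr rfl fun i _ => Finset.sum_congr rfl fun j _ => by ring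
  rw [this, Matrix.trace, Finset.mul_sum, ← Finset.sum_add_distrib]
  refine Finset.sum_congr rfl fun i _ => ?_
  simp only [mul_add, Finset.sum_add_distrib]
  congr 1
  simp [mul_ite, Finset.sum_ite_eq', Matrix.diag, mul_comm]

lemma integral_shift_mul {Ω : Type*} [MeasurableSpace Ω] (μ : Measure Ω) [IsProbabilityMeasure μ]
    (u v : Ω → ℝ) (b c : ℝ) (hu : MemLp u 2 μ) (hv : MemLp v 2 μ) :
    ∫ ω, (b + u ω) * (c + v ω) ∂μ
      = b * c + b * (∫ ω, v ω ∂μ) + c * (∫ ω, u ω ∂μ) + ∫ ω, u ω * v ω ∂μ := by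
  have hu1 : Integrable u μ := hu.integrable one_le_two
  have hv1 : Integrable v μ := hv.integrable one_le_two
  have huv : Integrable (fun ω => u ω * v ω) μ := l2_mul_integrable hu hv
  have heq : (fun ω => (b + u ω) * (c + v ω))
      = fun ω => b * c + (b * v ω + (c * u ω + u ω * v ω)) := by funext ω; ring
  have h3 : Integrable (fun ω => c * u ω + u ω * v ω) μ := (hu1.const_mul c).add huv
  have h2 : Integrable (fun ω => b * v ω + (c * u ω + u ω * v ω)) μ := (hv1.const_mul b).add h3
  rw [heq, integral_add (integrable_const _) h2, integral_add (hv1.const_mul b) h3,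
    integral_add (hu1.const_mul c) huv, integral_const,
    MeasureTheory.integral_const_mul, MeasureTheory.integral_const_mul]
  simp [measure_univ]
  ring

/-- With `n − K − L > 0` and `G_B2SLS = H − (K/(n − K − L))·(M − H)`, one has
`tr(G_B2SLS) = 0`, `G_B2SLS·W = 0`, `G_B2SLS·Z̃ = Z̃`, and consequently under homoskedasticity
`E[xᵀG_B2SLS x] = ‖ℓ̃‖²` and `E[yᵀG_B2SLS x] = β·‖ℓ̃‖²`. -/
theorem stmt5
    {Ω : Type*} [MeasurableSpace Ω] (μ : Measure Ω) [IsProbabilityMeasure μ]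
    (n K L : ℕ) (hn : 1 ≤ n) (hK : 1 ≤ K) (hL : 1 ≤ L) (hnKL : K + L < n)
    (W : Matrix (Fin n) (Fin L) ℝ) (Z : Matrix (Fin n) (Fin K) ℝ)
    (hWrank : W.rank = L) (hZrank : Z.rank = K) (hWZ : Wᵀ * Z = 0)
    (M H G : Matrix (Fin n) (Fin n) ℝ)
    (hM : M = 1 - W * (Wᵀ * W)⁻¹ * Wᵀ)
    (hH : H = Z * (Zᵀ * Z)⁻¹ * Zᵀ)
    (hG : G = H - ((K : ℝ) / ((n : ℝ) - K - L)) • (M - H))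
    (ε ν : Ω → Fin n → ℝ)
    (hmeas : ∀ i, Measurable (fun ω => (ε ω i, ν ω i)))
    (hindep : ProbabilityTheory.iIndepFun
      (fun i ω => (ε ω i, ν ω i)) μ)
    (hεL2 : ∀ i, MemLp (fun ω => ε ω i) 2 μ)
    (hνL2 : ∀ i, MemLp (fun ω => ν ω i) 2 μ)
    (α : Fin L → ℝ) (π : Fin K → ℝ) (δ : Fin L → ℝ) (β : ℝ)
    (hνmean : ∀ i, ∫ ω, ν ω i ∂μ = 0)
    (hεmean : ∀ i, ∫ ω, ε ω i ∂μ = W i ⬝ᵥ α)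
    (σνsq σεν : ℝ)
    (hhomν : ∀ i, ∫ ω, (ν ω i) ^ 2 ∂μ = σνsq)
    (hhomεν : ∀ i, ∫ ω, ε ω i * ν ω i ∂μ = σεν)
    (x y : Ω → Fin n → ℝ) (ℓ : Fin n → ℝ)
    (hx : ∀ ω, x ω = Z *ᵥ π + W *ᵥ δ + ν ω)
    (hℓ : ℓ = Z *ᵥ π)
    (hy : ∀ ω, y ω = β • x ω + ε ω) :
    G.trace = 0 ∧ G * W = 0 ∧ G * Z = Z ∧
    (∫ ω, x ω ⬝ᵥ (G *ᵥ x ω) ∂μ = ℓ ⬝ᵥ ℓ) ∧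
    (∫ ω, y ω ⬝ᵥ (G *ᵥ x ω) ∂μ = β * (ℓ ⬝ᵥ ℓ)) := by
  -- matrix facts
  have hWu : IsUnit (Wᵀ * W) := isUnit_of_rank_eq_card _ (by
    rw [Matrix.rank_transpose_mul_self]; simpa using hWrank)
  have hZu : IsUnit (Zᵀ * Z) := isUnit_of_rank_eq_card _ (by
    rw [Matrix.rank_transpose_mul_self]; simpa using hZrank)
  have hWd : IsUnit (Wᵀ * W).det := (Matrix.isUnit_iff_isUnit_det _).mp hWu
  have hZd : IsUnit (Zᵀ * Z).det := (Matrix.isUnit_iff_isUnit_det _).mp hZu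
  have hZW : Zᵀ * W = 0 := by
    have := congrArg Matrix.transpose hWZ
    simpa [Matrix.transpose_mul] using this
  have hHW : H * W = 0 := by
    rw [hH, Matrix.mul_assoc, Matrix.mul_assoc, hZW]
    simp [Matrix.mul_assoc]
  have hHZ : H * Z = Z := by
    rw [hH, Matrix.mul_assoc, Matrix.mul_assoc, Matrix.nonsing_inv_mul _ hZd]
    simp
  have hMW : M * W = 0 := by
    rw [hM, Matrix.sub_mul, Matrix.one_mul, Matrix.mul_assoc, Matrix.mul_assoc,
      Matrix.nonsing_inv_mul _ hWd]
    simp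
  have hMZ : M * Z = Z := by
    rw [hM, Matrix.sub_mul, Matrix.one_mul, Matrix.mul_assoc, Matrix.mul_assoc, hWZ]
    simp [Matrix.mul_assoc]
  have htrH : H.trace = K := by
    rw [hH, Matrix.trace_mul_comm, ← Matrix.mul_assoc, Matrix.mul_nonsing_inv _ hZd]
    simp
  have htrM : M.trace = (n : ℝ) - L := by
    rw [hM, Matrix.trace_sub, Matrix.trace_one, Matrix.trace_mul_comm, ← Matrix.mul_assoc,
      Matrix.mul_nonsing_inv _ hWd]
    simp
  have hden : ((n : ℝ) - K - L) ≠ 0 := by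
    have : (K + L : ℝ) < n := by exact_mod_cast hnKL
    linarith
  have htrG : G.trace = 0 := by
    rw [hG, Matrix.trace_sub, Matrix.trace_smul, Matrix.trace_sub, htrH, htrM]
    rw [smul_eq_mul, div_mul_eq_mul_div, sub_eq_zero, eq_div_iff hden]
    ring
  have hGW : G * W = 0 := by
    rw [hG, Matrix.sub_mul, Matrix.smul_mul, Matrix.sub_mul, hHW, hMW]
    simp
  have hGZ : G * Z = Z := by
    rw [hG, Matrix.sub_mul, Matrix.smul_mul, Matrix.sub_mul, hHZ, hMZ]
    simp
  -- probabilistic part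
  set a : Fin n → ℝ := Z *ᵥ π + W *ᵥ δ with ha
  set e : Fin n → ℝ := W *ᵥ α with he
  have hxi : ∀ ω i, x ω i = a i + ν ω i := by
    intro ω i; rw [hx]; simp [ha]
  have hEνν : ∀ i j, ∫ ω, ν ω i * ν ω j ∂μ = if i = j then σνsq else 0 := by
    intro i j
    rcases eq_or_ne i j with rfl | hij
    · have := hhomν i
      simp only [pow_two] at this
      simpa using this
    · have hI : ProbabilityTheory.IndepFun (fun ω => ν ω i) (fun ω => ν ω j) μ :=
        (hindep.indepFun hij).comp measurable_snd measurable_snd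
      rw [hI.integral_fun_mul_eq_mul_integral (hνL2 i).aestronglyMeasurable (hνL2 j).aestronglyMeasurable,
        hνmean, hνmean]
      simp [hij]
  have hEεν : ∀ i j, ∫ ω, ε ω i * ν ω j ∂μ = if i = j then σεν else 0 := by
    intro i j
    rcases eq_or_ne i j with rfl | hij
    · simpa using hhomεν i
    · have hI : ProbabilityTheory.IndepFun (fun ω => ε ω i) (fun ω => ν ω j) μ :=
        (hindep.indepFun hij).comp measurable_fst measurable_snd
      rw [hI.integral_fun_mul_eq_mul_integral (hεL2 i).aestronglyMeasurable (hνL2 j).aestronglyMeasurable,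
        hνmean]
      simp [hij]
  have hxL2 : ∀ i, MemLp (fun ω => x ω i) 2 μ := by
    intro i
    have : (fun ω => x ω i) = fun ω => a i + ν ω i := funext fun ω => hxi ω i
    rw [this]
    exact (memLp_const (a i)).add (hνL2 i)
  have hyL2 : ∀ i, MemLp (fun ω => y ω i) 2 μ := by
    intro i
    have : (fun ω => y ω i) = fun ω => β * x ω i + ε ω i := by
      funext ω; rw [hy]; simp
    rw [this]
    exact ((hxL2 i).const_mul β).add (hεL2 i)
  -- E[x_i x_j]
  have hExx : ∀ i j, ∫ ω, x ω i * x ω j ∂μ = a i * a j + if i = j then σνsq else 0 := by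
    intro i j
    have heq : (fun ω => x ω i * x ω j) = fun ω => (a i + ν ω i) * (a j + ν ω j) := by
      funext ω; rw [hxi, hxi]
    rw [heq, integral_shift_mul μ _ _ _ _ (hνL2 i) (hνL2 j), hνmean, hνmean, hEνν]
    ring
  -- E[y_i x_j]
  have hEyx : ∀ i j, ∫ ω, y ω i * x ω j ∂μ
      = (β • a + e) i * a j + if i = j then β * σνsq + σεν else 0 := by
    intro i j
    have heq : (fun ω => y ω i * x ω j)
        = fun ω => (β * a i + (β * ν ω i + ε ω i)) * (a j + ν ω j) := by
      funext ω; rw [hy]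
      simp only [Pi.add_apply, Pi.smul_apply, smul_eq_mul, hxi]
      ring
    have huL2 : MemLp (fun ω => β * ν ω i + ε ω i) 2 μ :=
      ((hνL2 i).const_mul β).add (hεL2 i)
    rw [heq, integral_shift_mul μ _ _ _ _ huL2 (hνL2 j)]
    have h1 : ∫ ω, β * ν ω i + ε ω i ∂μ = e i := by
      rw [integral_add (((hνL2 i).integrable one_le_two).const_mul β)
        ((hεL2 i).integrable one_le_two), MeasureTheory.integral_const_mul, hνmean, hεmean]
      simp [he, Matrix.mulVec]
    have h2 : ∫ ω, (β * ν ω i + ε ω i) * ν ω j ∂μ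
        = if i = j then β * σνsq + σεν else 0 := by
      have heq2 : (fun ω => (β * ν ω i + ε ω i) * ν ω j)
          = fun ω => β * (ν ω i * ν ω j) + ε ω i * ν ω j := by
        funext ω; ring
      rw [heq2, integral_add ((l2_mul_integrable (hνL2 i) (hνL2 j)).const_mul β)
        (l2_mul_integrable (hεL2 i) (hνL2 j)), MeasureTheory.integral_const_mul,
        hEνν, hEεν]
      split <;> ring
    rw [h1, h2, hνmean]
    simp [Pi.add_apply, Pi.smul_apply]
    ring
  -- vector identities
  have hGa : G *ᵥ a = ℓ := by
    rw [ha, Matrix.mulVec_add, Matrix.mulVec_mulVec, Matrix.mulVec_mulVec, hGW, hGZ, hℓ]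
    simp
  have hWZv : ∀ (u : Fin L → ℝ), (W *ᵥ u) ⬝ᵥ ℓ = 0 := by
    intro u
    rw [hℓ, dotProduct_comm, Matrix.dotProduct_mulVec, ← Matrix.mulVec_transpose,
      Matrix.mulVec_mulVec, hWZ]
    simp
  have haℓ : a ⬝ᵥ ℓ = ℓ ⬝ᵥ ℓ := by
    rw [ha, add_dotProduct, hWZv, hℓ]
    simp
  have heℓ : e ⬝ᵥ ℓ = 0 := hWZv α
  -- conclude
  refine ⟨htrG, hGW, hGZ, ?_, ?_⟩
  · rw [master μ G x x (fun i j => l2_mul_integrable (hxL2 i) (hxL2 j)) a a σνsq hExx,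
      hGa, haℓ, htrG]
    ring
  · rw [master μ G y x (fun i j => l2_mul_integrable (hyL2 i) (hxL2 j)) (β • a + e) a
      (β * σνsq + σεν) hEyx, hGa, htrG, add_dotProduct, smul_dotProduct,
      haℓ, heℓ, smul_eq_mul]
    ring
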